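/- Let V ~ N(-ℓI/2, ℓI·Σ) be an N-dimensional Gaussian with mean -(ℓI/2)·1_N and covariance ℓI·Σ where Σ = (1/2)(I_N + 1_N 1_N^T), ℓ > 0, I ≥ 0. Then the limiting acceptance rate E[ Σ_{n=1}^N exp(V^n) / (1 + Σ_{m=1}^N exp(V^m)) ] is at least (1 + exp(ℓI)/N)^{-1}, and in particular is strictly positive. -/

import Mathlib

open MeasureTheory ProbabilityTheory Real
open scoped NNReal ENNReal

lemma exp_quad_integral (t : ℝ) :
    ∫ x : ℝ, Real.exp (-(1/2) * x ^ 2 + t * x) = Real.sqrt (2 * π) * Real.exp (t ^ 2 / 2) := by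
  have h : ∀ x : ℝ, Real.exp (-(1/2) * x ^ 2 + t * x)
      = Real.exp (t ^ 2 / 2) * Real.exp (-(1/2) * (x - t) ^ 2) := by
    intro x
    rw [← Real.exp_add]
    congr 1
    ring
  simp_rw [h]
  rw [integral_const_mul, integral_sub_right_eq_self (fun y : ℝ => Real.exp (-(1/2) * y ^ 2)) t,
    integral_gaussian (1/2), show π / (1/2) = 2 * π by ring]
  ring

lemma exp_quad_integrable (t : ℝ) :
    Integrable (fun x : ℝ => Real.exp (-(1/2) * x ^ 2 + t * x)) := by
  have h : Integrable (fun x : ℝ => Real.exp (t ^ 2 / 2) * Real.exp (-(1/2) * (x - t) ^ 2)) :=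
    ((integrable_exp_neg_mul_sq (by norm_num : (0:ℝ) < 1/2)).comp_sub_right t).const_mul _
  refine h.congr (Filter.Eventually.of_forall fun x => ?_)
  show Real.exp (t ^ 2 / 2) * Real.exp (-(1/2) * (x - t) ^ 2) = Real.exp (-(1/2) * x ^ 2 + t * x)
  rw [← Real.exp_add]
  congr 1
  ring

lemma gaussian_density_smul (g : ℝ → ℝ) :
    ∫ x, g x ∂(gaussianReal 0 1)
      = ∫ x, ((Real.toNNReal (gaussianPDFReal 0 1 x) : ℝ≥0) : ℝ) * g x := by
  rw [gaussianReal_of_var_ne_zero 0 one_ne_zero]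
  have hd : gaussianPDF 0 1 = fun x => ((Real.toNNReal (gaussianPDFReal 0 1 x) : ℝ≥0) : ℝ≥0∞) :=
    rfl
  rw [hd, integral_withDensity_eq_integral_smul ((measurable_gaussianPDFReal 0 1).real_toNNReal) g]
  simp [NNReal.smul_def]

lemma pdf_mul_exp (t x : ℝ) :
    ((Real.toNNReal (gaussianPDFReal 0 1 x) : ℝ≥0) : ℝ) * Real.exp (t * x)
      = (Real.sqrt (2 * π))⁻¹ * Real.exp (-(1/2) * x ^ 2 + t * x) := by
  rw [Real.coe_toNNReal _ (gaussianPDFReal_nonneg 0 1 x), gaussianPDFReal]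
  simp only [NNReal.coe_one, mul_one, sub_zero]
  rw [mul_assoc, ← Real.exp_add]
  congr 1
  ring

lemma gaussian_exp_integral (t : ℝ) :
    ∫ x, Real.exp (t * x) ∂(gaussianReal 0 1) = Real.exp (t ^ 2 / 2) := by
  rw [gaussian_density_smul]
  simp_rw [pdf_mul_exp]
  rw [integral_const_mul, exp_quad_integral, ← mul_assoc,
    inv_mul_cancel₀ (ne_of_gt (Real.sqrt_pos.mpr (by positivity))), one_mul]

lemma gaussian_exp_integrable (t : ℝ) :
    Integrable (fun x => Real.exp (t * x)) (gaussianReal 0 1) := by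
  rw [gaussianReal_of_var_ne_zero 0 one_ne_zero]
  have hd : gaussianPDF 0 1 = fun x => ((Real.toNNReal (gaussianPDFReal 0 1 x) : ℝ≥0) : ℝ≥0∞) :=
    rfl
  rw [hd, integrable_withDensity_iff_integrable_smul
    ((measurable_gaussianPDFReal 0 1).real_toNNReal)]
  refine ((exp_quad_integrable t).const_mul ((Real.sqrt (2 * π))⁻¹)).congr
    (Filter.Eventually.of_forall fun x => ?_)
  show (Real.sqrt (2 * π))⁻¹ * Real.exp (-(1/2) * x ^ 2 + t * x)
      = (Real.toNNReal (gaussianPDFReal 0 1 x) : ℝ≥0) • Real.exp (t * x)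
  rw [NNReal.smul_def, Real.coe_toNNReal _ (gaussianPDFReal_nonneg 0 1 x), smul_eq_mul]
  rw [← Real.coe_toNNReal (gaussianPDFReal 0 1 x) (gaussianPDFReal_nonneg 0 1 x)]
  exact (pdf_mul_exp t x).symm

lemma pi_map_eval (N : ℕ) (n : Fin N) :
    (Measure.pi fun _ : Fin N => gaussianReal 0 1).map (fun z => z n) = gaussianReal 0 1 := by
  refine Measure.ext fun s hs => ?_
  rw [Measure.map_apply (measurable_pi_apply n) hs]
  have hpre : (fun z : Fin N → ℝ => z n) ⁻¹' s
      = Set.pi Set.univ (Function.update (fun _ : Fin N => (Set.univ : Set ℝ)) n s) := by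
    ext z
    simp [Function.update_apply]
  rw [hpre, Measure.pi_pi]
  have h1 : ∀ i : Fin N,
      (gaussianReal 0 1) (Function.update (fun _ : Fin N => (Set.univ : Set ℝ)) n s i)
        = if i = n then (gaussianReal 0 1) s else 1 := by
    intro i
    rw [Function.update_apply]
    split <;> simp
  rw [Finset.prod_congr rfl fun i _ => h1 i, Finset.prod_ite_eq']
  simp

lemma pi_eval_integral (N : ℕ) (n : Fin N) (f : ℝ → ℝ) (hf : AEStronglyMeasurable f (gaussianReal 0 1)) :
    ∫ z : Fin N → ℝ, f (z n) ∂(Measure.pi fun _ : Fin N => gaussianReal 0 1)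
      = ∫ x, f x ∂(gaussianReal 0 1) := by
  rw [← pi_map_eval N n] at hf
  conv_rhs => rw [← pi_map_eval N n]
  rw [integral_map (measurable_pi_apply n).aemeasurable hf]

lemma pi_eval_integrable (N : ℕ) (n : Fin N) (f : ℝ → ℝ)
    (hf : Integrable f (gaussianReal 0 1)) :
    Integrable (fun z : Fin N → ℝ => f (z n)) (Measure.pi fun _ : Fin N => gaussianReal 0 1) := by
  have hm := hf.aestronglyMeasurable
  rw [← pi_map_eval N n] at hf hm
  exact (integrable_map_measure hm (measurable_pi_apply n).aemeasurable).mp hf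

lemma tangent_aux {s q c : ℝ} (hs : 0 < s) (hq : 0 < q) (hc : 0 < c) (h : 1 ≤ s * q) :
    (1 + 2 * c - q) / (1 + c) ^ 2 ≤ s / (1 + s) := by
  rw [div_le_div_iff₀ (by positivity) (by positivity)]
  nlinarith [sq_nonneg (c * s - 1), mul_pos hs hq, mul_pos hs hc, sq_nonneg (c - q)]

lemma cs_exp {ι : Type*} [Fintype ι] (x : ι → ℝ) :
    (Fintype.card ι : ℝ) ^ 2 ≤ (∑ n, Real.exp (x n)) * (∑ n, Real.exp (-x n)) := by
  have h := Finset.sum_mul_sq_le_sq_mul_sq Finset.univ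
    (fun n => Real.exp (x n / 2)) (fun n => Real.exp (-x n / 2))
  have e1 : ∀ n : ι, Real.exp (x n / 2) * Real.exp (-x n / 2) = 1 := fun n => by
    rw [← Real.exp_add, show x n / 2 + -x n / 2 = 0 by ring, Real.exp_zero]
  have e2 : ∀ n : ι, Real.exp (x n / 2) ^ 2 = Real.exp (x n) := fun n => by
    rw [sq, ← Real.exp_add]; congr 1; ring
  have e3 : ∀ n : ι, Real.exp (-x n / 2) ^ 2 = Real.exp (-x n) := fun n => by
    rw [sq, ← Real.exp_add]; congr 1; ring
  simp_rw [e1, e2, e3, Finset.sum_const, Finset.card_univ, nsmul_eq_mul, mul_one] at h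
  exact h


open MeasureTheory ProbabilityTheory

/-- Limiting RW-EHMM acceptance rate: for `V ~ N(-(ℓI/2)·1_N, ℓI·Σ)` with
`Σ = ½(I_N + 1_N 1_Nᵀ)`, realised as `Vⁿ = -(ℓI/2) + √(ℓI)(W + Zₙ)/√2` with
`W, Z₁,…,Z_N` i.i.d. standard normal, the expected acceptance probability is at
least `(1 + exp(ℓI)/N)⁻¹ > 0`. -/
theorem limiting_acceptance_rate_lower_bound (N : ℕ) (hN : 1 ≤ N)
    (ℓ I : ℝ) (hl : 0 < ℓ) (hI : 0 ≤ I) :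
    (1 + Real.exp (ℓ * I) / N)⁻¹ ≤
      ∫ p : ℝ × (Fin N → ℝ),
        (∑ n : Fin N,
            Real.exp (-(ℓ * I / 2) + Real.sqrt (ℓ * I) * (p.1 + p.2 n) / Real.sqrt 2)) /
          (1 + ∑ n : Fin N,
            Real.exp (-(ℓ * I / 2) + Real.sqrt (ℓ * I) * (p.1 + p.2 n) / Real.sqrt 2))
        ∂((gaussianReal 0 1).prod (Measure.pi fun _ : Fin N => gaussianReal 0 1)) := by
  haveI : Nonempty (Fin N) := Fin.pos_iff_nonempty.mp hN
  have hN0 : (0:ℝ) < N := by exact_mod_cast hN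
  have hli : 0 ≤ ℓ * I := mul_nonneg hl.le hI
  set a : ℝ := Real.sqrt (ℓ * I) / Real.sqrt 2 with ha
  have ha2 : a ^ 2 = ℓ * I / 2 := by
    rw [ha, div_pow, Real.sq_sqrt hli, Real.sq_sqrt (by norm_num : (0:ℝ) ≤ 2)]
  set μ := (gaussianReal 0 1).prod (Measure.pi fun _ : Fin N => gaussianReal 0 1) with hμ
  haveI : IsProbabilityMeasure μ := by rw [hμ]; infer_instance
  set F : ℝ × (Fin N → ℝ) → ℝ := fun p => ∑ n : Fin N,
      Real.exp (-(ℓ * I / 2) + Real.sqrt (ℓ * I) * (p.1 + p.2 n) / Real.sqrt 2) with hF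
  set G : ℝ × (Fin N → ℝ) → ℝ := fun p => ∑ n : Fin N,
      Real.exp (-(-(ℓ * I / 2) + Real.sqrt (ℓ * I) * (p.1 + p.2 n) / Real.sqrt 2)) with hG
  set c : ℝ := Real.exp (ℓ * I) / N with hc
  have hc0 : 0 < c := by rw [hc]; positivity
  show (1 + Real.exp (ℓ * I) / N)⁻¹ ≤ ∫ p, F p / (1 + F p) ∂μ
  -- pointwise product decomposition of the terms of G
  have hsplit : ∀ (n : Fin N) (p : ℝ × (Fin N → ℝ)),
      Real.exp (-(-(ℓ * I / 2) + Real.sqrt (ℓ * I) * (p.1 + p.2 n) / Real.sqrt 2))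
        = (Real.exp (ℓ * I / 2) * Real.exp (-a * p.1)) * Real.exp (-a * p.2 n) := by
    intro n p
    rw [← Real.exp_add, ← Real.exp_add]
    congr 1
    rw [ha]
    ring
  -- integrability of each term of G
  have hterm : ∀ n : Fin N, Integrable (fun p : ℝ × (Fin N → ℝ) =>
      Real.exp (-(-(ℓ * I / 2) + Real.sqrt (ℓ * I) * (p.1 + p.2 n) / Real.sqrt 2))) μ := by
    intro n
    have h1 : Integrable (fun w : ℝ => Real.exp (ℓ * I / 2) * Real.exp (-a * w))
        (gaussianReal 0 1) := (gaussian_exp_integrable (-a)).const_mul _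
    have h2 : Integrable (fun z : Fin N → ℝ => Real.exp (-a * z n))
        (Measure.pi fun _ : Fin N => gaussianReal 0 1) :=
      pi_eval_integrable N n _ (gaussian_exp_integrable (-a))
    have h3 := h1.mul_prod h2
    rw [← hμ] at h3
    exact h3.congr (Filter.Eventually.of_forall fun p => (hsplit n p).symm)
  have hGint : Integrable G μ := by
    rw [hG]; exact integrable_finset_sum _ fun n _ => hterm n
  -- the integral of each term of G
  have hterm_int : ∀ n : Fin N, (∫ p, Real.exp (-(-(ℓ * I / 2)
      + Real.sqrt (ℓ * I) * (p.1 + p.2 n) / Real.sqrt 2)) ∂μ) = Real.exp (ℓ * I) := by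
    intro n
    have hrw : (fun p : ℝ × (Fin N → ℝ) =>
        Real.exp (-(-(ℓ * I / 2) + Real.sqrt (ℓ * I) * (p.1 + p.2 n) / Real.sqrt 2)))
        = fun p => (fun w : ℝ => Real.exp (ℓ * I / 2) * Real.exp (-a * w)) p.1
            * (fun z : Fin N → ℝ => Real.exp (-a * z n)) p.2 :=
      funext fun p => hsplit n p
    have hpm := integral_prod_mul (μ := gaussianReal 0 1)
      (ν := Measure.pi fun _ : Fin N => gaussianReal 0 1)
      (fun w : ℝ => Real.exp (ℓ * I / 2) * Real.exp (-a * w))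
      (fun z : Fin N → ℝ => Real.exp (-a * z n))
    rw [hrw, hμ, hpm, integral_const_mul, gaussian_exp_integral,
      pi_eval_integral N n (fun x => Real.exp (-a * x)) ((Real.measurable_exp.comp (measurable_id.const_mul (-a))).aestronglyMeasurable),
      gaussian_exp_integral, show (-a) ^ 2 = a ^ 2 by ring, ha2, ← Real.exp_add, ← Real.exp_add]
    congr 1
    ring
  have hGint_eq : (∫ p, G p ∂μ) = N * Real.exp (ℓ * I) := by
    rw [hG, integral_finset_sum _ fun n _ => hterm n]
    rw [Finset.sum_congr rfl fun n _ => hterm_int n, Finset.sum_const, Finset.card_univ,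
      Fintype.card_fin, nsmul_eq_mul]
  -- positivity and measurability of F
  have hFpos : ∀ p, 0 < F p := fun p =>
    Finset.sum_pos (fun n _ => Real.exp_pos _) Finset.univ_nonempty
  have hGpos : ∀ p, 0 < G p := fun p =>
    Finset.sum_pos (fun n _ => Real.exp_pos _) Finset.univ_nonempty
  have hFmeas : Measurable F := by
    rw [hF]
    exact Finset.measurable_sum _ fun n _ => by fun_prop
  have hFint : Integrable (fun p => F p / (1 + F p)) μ := by
    refine ⟨(hFmeas.div (measurable_const.add hFmeas)).aestronglyMeasurable, ?_⟩
    refine HasFiniteIntegral.of_bounded (C := 1) (Filter.Eventually.of_forall fun p => ?_)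
    have h1 : 0 < 1 + F p := by linarith [hFpos p]
    rw [Real.norm_eq_abs, abs_of_nonneg (div_nonneg (hFpos p).le h1.le), div_le_one h1]
    linarith [hFpos p]
  have hLint : Integrable (fun p => (1 + 2 * c - G p / (N : ℝ) ^ 2) / (1 + c) ^ 2) μ :=
    (((integrable_const (1 + 2 * c)).sub (hGint.div_const _)).div_const _)
  have hpt : ∀ p, (1 + 2 * c - G p / (N : ℝ) ^ 2) / (1 + c) ^ 2 ≤ F p / (1 + F p) := by
    intro p
    have hkey : 1 ≤ F p * (G p / (N : ℝ) ^ 2) := by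
      have hcs : ((N : ℝ)) ^ 2 ≤ F p * G p := by
        have h := cs_exp (fun n : Fin N =>
          -(ℓ * I / 2) + Real.sqrt (ℓ * I) * (p.1 + p.2 n) / Real.sqrt 2)
        simpa [hF, hG] using h
      rw [mul_div_assoc', le_div_iff₀ (by positivity), one_mul]
      exact hcs
    exact tangent_aux (hFpos p) (by positivity) hc0 hkey
  calc (1 + Real.exp (ℓ * I) / N)⁻¹
      = ∫ p, (1 + 2 * c - G p / (N : ℝ) ^ 2) / (1 + c) ^ 2 ∂μ := by
        rw [integral_div, integral_sub (integrable_const _) (hGint.div_const _),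
          integral_const, integral_div, hGint_eq]
        simp only [probReal_univ, measure_univ, ENNReal.toReal_one, one_smul]
        have h1c : (0:ℝ) < 1 + c := by linarith
        rw [hc]
        field_simp
        ring
    _ ≤ ∫ p, F p / (1 + F p) ∂μ := integral_mono hLint hFint hpt
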